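/- For natural numbers p and j with j ≤ p, define λ^p_j := (1/j!) · ∫_{0}^{∞} e^{-t} · t^{p+1} · (1+t)^{j-p-1} dt. Then for every j with 0 ≤ j ≤ p−1 one has λ^p_j < λ^p_{j+1}; that is, λ^p_0 < λ^p_1 < ⋯ < λ^p_p. -/

import Mathlib

open MeasureTheory

/-- The eigenvalue `λ^p_j` of the Toeplitz operator on `ℂP¹` with radial symbol
`e^{-1/|z|²}`. -/
noncomputable def toeplitzExpEigenvalue (p j : ℕ) : ℝ :=
  (1 / (j.factorial : ℝ)) *
    ∫ t in Set.Ioi (0 : ℝ),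
      Real.exp (-t) * t ^ (p + 1) * (1 + t) ^ ((j : ℤ) - (p : ℤ) - 1)

lemma integral_exp_neg_mul_pow (n : ℕ) :
    ∫ t in Set.Ioi (0 : ℝ), Real.exp (-t) * t ^ n = n.factorial := by
  rw [← Real.Gamma_nat_eq_factorial,
    Real.Gamma_eq_integral (by positivity : (0:ℝ) < n + 1)]
  refine setIntegral_congr_fun measurableSet_Ioi fun t ht => ?_
  rw [add_sub_cancel_right, Real.rpow_natCast]

lemma integrableOn_exp_neg_mul_pow (n : ℕ) :
    IntegrableOn (fun t => Real.exp (-t) * t ^ n) (Set.Ioi (0 : ℝ)) := by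
  have h := Real.GammaIntegral_convergent (by positivity : (0:ℝ) < n + 1)
  refine h.congr_fun (fun t ht => ?_) measurableSet_Ioi
  simp only [add_sub_cancel_right, Real.rpow_natCast]

lemma integrableOn_exp_neg_mul_pow_mul_zpow (n : ℕ) (z : ℤ) (hz : z ≤ 0) :
    IntegrableOn (fun t => Real.exp (-t) * t ^ n * (1 + t) ^ z)
      (Set.Ioi (0 : ℝ)) := by
  refine Integrable.mono (integrableOn_exp_neg_mul_pow n) ?_ ?_
  · refine ContinuousOn.aestronglyMeasurable ?_ measurableSet_Ioi
    refine ContinuousOn.mul (by fun_prop) ?_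
    refine ContinuousOn.zpow₀ (by fun_prop) z fun t ht => Or.inl ?_
    have : (0:ℝ) < t := ht
    positivity
  · refine (ae_restrict_iff' measurableSet_Ioi).2
      (Filter.Eventually.of_forall fun t ht => ?_)
    have h1 : (0:ℝ) < t := ht
    rw [Real.norm_eq_abs, Real.norm_eq_abs, abs_of_nonneg (by positivity),
      abs_of_nonneg (by positivity)]
    exact mul_le_of_le_one_right (by positivity)
      (zpow_le_one_of_nonpos₀ (by linarith) hz)

/-- The eigenvalues are strictly increasing in `j`:
`λ^p_0 < λ^p_1 < ⋯ < λ^p_p`. -/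
theorem toeplitzExpEigenvalue_strictMono (p j : ℕ) (hj : j < p) :
    toeplitzExpEigenvalue p j < toeplitzExpEigenvalue p (j + 1) := by
  set z : ℤ := (j : ℤ) - (p : ℤ) - 1 with hzdef
  have hz : z ≤ 0 := by omega
  have hz1 : z + 1 ≤ 0 := by omega
  set g : ℝ → ℝ := fun t => Real.exp (-t) * t ^ (p + 1) * (1 + t) ^ z with hgdef
  set F : ℝ → ℝ := fun t =>
    Real.exp (-t) * t ^ (p + 1) * (1 + t) ^ z * (t - j) with hFdef
  have hgi : IntegrableOn g (Set.Ioi (0:ℝ)) :=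
    integrableOn_exp_neg_mul_pow_mul_zpow (p + 1) z hz
  have hFi : IntegrableOn F (Set.Ioi (0:ℝ)) := by
    have h := (integrableOn_exp_neg_mul_pow_mul_zpow (p + 2) z hz).sub
      ((integrableOn_exp_neg_mul_pow_mul_zpow (p + 1) z hz).const_mul (j : ℝ))
    refine IntegrableOn.congr_fun h (fun t ht => ?_) measurableSet_Ioi
    simp only [Pi.sub_apply, hFdef]
    ring
  -- the key positivity
  have hFpos : 0 < ∫ t in Set.Ioi (0:ℝ), F t := by
    rcases Nat.eq_zero_or_pos j with hj0 | hj1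
    · -- j = 0 : the integrand is positive
      have hpt : ∀ t ∈ Set.Ioi (0:ℝ), 0 < F t := by
        intro t ht
        have h1 : (0:ℝ) < t := ht
        simp only [hFdef, hj0, Nat.cast_zero, sub_zero]
        positivity
      rw [setIntegral_pos_iff_support_of_nonneg_ae
          ((ae_restrict_iff' measurableSet_Ioi).2
            (Filter.Eventually.of_forall fun t ht => (hpt t ht).le)) hFi]
      refine lt_of_lt_of_le ?_
        (measure_mono (fun t ht => ⟨ne_of_gt (hpt t ht), ht⟩ :
          Set.Ioi (0:ℝ) ⊆ Function.support F ∩ Set.Ioi 0))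
      simp [Real.volume_Ioi]
    · -- j ≥ 1 : compare with c * (exp(-t) t^j (t - j))
      set k : ℕ := p + 1 - j with hkdef
      have hpk : p + 1 = j + k := by omega
      have hzk : z = -(k : ℤ) := by
        simp only [hzdef, hkdef]
        push_cast [Nat.cast_sub (by omega : j ≤ p + 1)]
        ring
      set v : ℝ := (j : ℝ) / (1 + j) with hvdef
      have hv0 : 0 < v := by
        have : (0:ℝ) < (j:ℝ) := by exact_mod_cast hj1
        positivity
      set G : ℝ → ℝ := fun t =>
        Real.exp (-t) * t ^ (j + 1) - (j : ℝ) * (Real.exp (-t) * t ^ j)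
        with hGdef
      have hGi : IntegrableOn G (Set.Ioi (0:ℝ)) :=
        (integrableOn_exp_neg_mul_pow (j + 1)).sub
          ((integrableOn_exp_neg_mul_pow j).const_mul (j : ℝ))
      have hGint : ∫ t in Set.Ioi (0:ℝ), G t = j.factorial := by
        simp only [hGdef]
        rw [integral_sub (integrableOn_exp_neg_mul_pow (j + 1))
            ((integrableOn_exp_neg_mul_pow j).const_mul (j : ℝ)),
          integral_const_mul, integral_exp_neg_mul_pow,
          integral_exp_neg_mul_pow]
        push_cast [Nat.factorial_succ]
        ring
      -- pointwise bound : v^k * G t ≤ F t on Ioi 0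
      have hpt : ∀ t ∈ Set.Ioi (0:ℝ), v ^ k * G t ≤ F t := by
        intro t ht
        have h1 : (0:ℝ) < t := ht
        have hu0 : 0 ≤ t / (1 + t) := by positivity
        have hF : F t = Real.exp (-t) * t ^ j * (t - j) * (t / (1 + t)) ^ k := by
          simp only [hFdef, hzk, zpow_neg, zpow_natCast, hpk, pow_add, div_pow]
          field_simp
        have hG : v ^ k * G t = Real.exp (-t) * t ^ j * (t - j) * v ^ k := by
          simp only [hGdef, pow_succ]
          ring
        rw [hF, hG]
        have hsign : 0 ≤ (t - j) * ((t / (1 + t)) ^ k - v ^ k) := by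
          rcases le_total t (j : ℝ) with h | h
          · have hle : (t / (1 + t)) ^ k ≤ v ^ k := by
              refine pow_le_pow_left₀ hu0 ?_ k
              rw [hvdef, div_le_div_iff₀ (by linarith) (by positivity)]
              nlinarith
            nlinarith [mul_nonneg (sub_nonneg.2 h) (sub_nonneg.2 hle)]
          · have hle : v ^ k ≤ (t / (1 + t)) ^ k := by
              refine pow_le_pow_left₀ hv0.le ?_ k
              rw [hvdef, div_le_div_iff₀ (by positivity) (by linarith)]
              nlinarith
            nlinarith [mul_nonneg (sub_nonneg.2 h) (sub_nonneg.2 hle)]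
          
        nlinarith [mul_nonneg (mul_nonneg (Real.exp_pos (-t)).le
          (pow_nonneg h1.le j)) hsign]
      calc (0:ℝ) < v ^ k * j.factorial := by positivity
        _ = ∫ t in Set.Ioi (0:ℝ), v ^ k * G t := by
            rw [integral_const_mul, hGint]
        _ ≤ ∫ t in Set.Ioi (0:ℝ), F t :=
            setIntegral_mono_on (hGi.const_mul _) hFi measurableSet_Ioi hpt
  -- relate the two eigenvalue integrals
  have hsplit : (∫ t in Set.Ioi (0:ℝ),
      Real.exp (-t) * t ^ (p + 1) * (1 + t) ^ (((j:ℤ) + 1) - p - 1))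
      = (∫ t in Set.Ioi (0:ℝ), F t) + ((j:ℝ) + 1) * ∫ t in Set.Ioi (0:ℝ), g t := by
    rw [← integral_const_mul, ← integral_add hFi (hgi.const_mul _)]
    refine setIntegral_congr_fun measurableSet_Ioi fun t ht => ?_
    have h1 : (0:ℝ) < t := ht
    have he : ((j:ℤ) + 1) - p - 1 = z + 1 := by omega
    rw [he, zpow_add_one₀ (by positivity : (1:ℝ) + t ≠ 0)]
    simp only [hFdef, hgdef]
    ring
  simp only [toeplitzExpEigenvalue]
  push_cast [Nat.factorial_succ]
  rw [hsplit]
  have hfac : (0:ℝ) < (j.factorial : ℝ) := by positivity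
  have hM := hgi
  set M : ℝ := ∫ t in Set.Ioi (0:ℝ), g t
  set D : ℝ := ∫ t in Set.Ioi (0:ℝ), F t
  have key : 1 / (((j:ℝ) + 1) * j.factorial) * (D + ((j:ℝ) + 1) * M)
      = 1 / (((j:ℝ) + 1) * j.factorial) * D + 1 / (j.factorial : ℝ) * M := by
    field_simp
  rw [key]
  have : 0 < 1 / (((j:ℝ) + 1) * j.factorial) * D := by positivity
  linarith
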